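/- Let G be a finite 2-group with center C such that G/C = ⟨aC⟩ × ⟨bC⟩ is a direct product of two groups of order two and the commutator subgroup G' = ⟨e⟩ has order two. If x = x₀ + x₁a + x₂b + x₃ab ∈ V_⊙(ℤ₂G) with x₀, x₁, x₂, x₃ ∈ ℤ₂C and χ(x₀) = 1, then χ(x₁) = χ(x₂) = χ(x₃) = 0, where χ denotes the augmentation map of ℤ₂C. -/

import Mathlib

/-- The group algebra of `G` over the field `ℤ₂` with two elements. -/
abbrev R2 (G : Type*) [Group G] := MonoidAlgebra (ZMod 2) G

/-- The image of a group element in the group algebra. -/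
noncomputable def emb {G : Type*} [Group G] (g : G) : R2 G := MonoidAlgebra.single g 1

/-- The augmentation map: the sum of the coefficients. -/
def aug {G : Type*} [Group G] (x : R2 G) : ZMod 2 := Finsupp.sum x.coeff fun _ c => c

/-- The canonical embedding of `G` into the unit group of its group algebra. -/
noncomputable def iota (G : Type*) [Group G] : G →* (R2 G)ˣ :=
  (Units.map (MonoidAlgebra.of (ZMod 2) G)).comp toUnits.toMonoidHom

open Classical in
/-- The map `g ↦ g` for `g ∈ C = Z(G)` and `g ↦ ge` for `g ∉ C`. -/
noncomputable def sigmaMap (G : Type*) [Group G] (e : G) : G → G :=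
  fun g => if g ∈ Subgroup.center G then g else g * e

/-- The involution `⊙` of `ℤ₂G`: the linear extension of `g ↦ g` for `g ∈ C = Z(G)`
and `g ↦ ge` for `g ∉ C`. -/
noncomputable def odot {G : Type*} [Group G] (e : G) (x : R2 G) : R2 G :=
  MonoidAlgebra.ofCoeff (Finsupp.mapDomain (sigmaMap G e) x.coeff)

/-- The set of unitary normalized units: `V_⊙(ℤ₂G) = {u ∈ V(ℤ₂G) : u⊙ = u⁻¹}`. -/
noncomputable def VodotSet (G : Type*) [Group G] (e : G) : Set (R2 G)ˣ :=
  {u | aug (u : R2 G) = 1 ∧ odot e (u : R2 G) = ((u⁻¹ : (R2 G)ˣ) : R2 G)}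

/-- Membership in the ideal `(1 + e)ℤ₂C` of `ℤ₂C`, where `C = Z(G)`. -/
noncomputable def InIdC {G : Type*} [Group G] (e : G) (x : R2 G) : Prop :=
  ∃ u : R2 G, ↑u.coeff.support ⊆ (Subgroup.center G : Set G) ∧ x = (1 + emb e) * u

/-- The set `W = {1 + y₁a + y₂b + y₃ab : yᵢ ∈ (1 + e)ℤ₂C}` inside the unit group. -/
noncomputable def WsetB {G : Type*} [Group G] (e a b : G) : Set (R2 G)ˣ :=
  {w | ∃ y₁ y₂ y₃ : R2 G, InIdC e y₁ ∧ InIdC e y₂ ∧ InIdC e y₃ ∧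
    (w : R2 G) = 1 + y₁ * emb a + y₂ * emb b + y₃ * (emb a * emb b)}

/-- The set `V(ℤ₂C)[2]` of normalized units of `ℤ₂C` of order dividing 2, where `C = Z(G)`. -/
noncomputable def V2Set (G : Type*) [Group G] : Set (R2 G)ˣ :=
  {u | ↑(u : R2 G).coeff.support ⊆ (Subgroup.center G : Set G) ∧ aug (u : R2 G) = 1 ∧ u * u = 1}


open scoped Classical
open scoped commutatorElement

section Aux
variable {G : Type*} [Group G]

lemma emb_mul (g h : G) : emb g * emb h = emb (g * h) := by
  unfold emb; rw [MonoidAlgebra.single_mul_single, one_mul]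

lemma emb_one : (emb (1 : G)) = 1 := rfl

lemma central_comm {w : R2 G} (hw : ↑w.coeff.support ⊆ (Subgroup.center G : Set G)) (z : R2 G) :
    w * z = z * w := by
  have key : ∀ c ∈ Subgroup.center G, ∀ r : ZMod 2,
      (MonoidAlgebra.single c r : R2 G) * z = z * MonoidAlgebra.single c r := by
    intro c hc r
    ext h
    rw [MonoidAlgebra.coeff_single_mul_apply, MonoidAlgebra.coeff_mul_single_apply, mul_comm]
    congr 1
    rw [(Subgroup.mem_center_iff.mp (inv_mem hc)) h]
  calc w * z = (w.coeff.sum fun c r => MonoidAlgebra.single c r) * z := by rw [MonoidAlgebra.sum_coeff_single]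
    _ = w.coeff.sum fun c r => (MonoidAlgebra.single c r : R2 G) * z := Finsupp.sum_mul _ _
    _ = w.coeff.sum fun c r => z * MonoidAlgebra.single c r := by
        apply Finsupp.sum_congr
        intro c hc
        exact key c (hw hc) _
    _ = z * w.coeff.sum fun c r => MonoidAlgebra.single c r := (Finsupp.mul_sum _ _).symm
    _ = z * w := by rw [MonoidAlgebra.sum_coeff_single]

lemma mul_emb_apply (w : R2 G) (s g : G) : (w * emb s).coeff g = w.coeff (g * s⁻¹) := by
  unfold emb; rw [MonoidAlgebra.coeff_mul_single_apply, mul_one]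

lemma emb_mul_apply (w : R2 G) (s g : G) : (emb s * w).coeff g = w.coeff (s⁻¹ * g) := by
  unfold emb; rw [MonoidAlgebra.coeff_single_mul_apply, one_mul]

lemma support_mul_emb {w : R2 G} (hw : ↑w.coeff.support ⊆ (Subgroup.center G : Set G)) (s : G) :
    ∀ g ∈ (w * emb s).coeff.support, g * s⁻¹ ∈ Subgroup.center G := by
  intro g hg
  rw [Finsupp.mem_support_iff, mul_emb_apply] at hg
  exact hw (Finsupp.mem_support_iff.mpr hg)

lemma supp_mul_C {w z : R2 G} (hw : ↑w.coeff.support ⊆ (Subgroup.center G : Set G))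
    (hz : ↑z.coeff.support ⊆ (Subgroup.center G : Set G)) :
    ↑(w * z).coeff.support ⊆ (Subgroup.center G : Set G) := by
  intro g hg
  have := MonoidAlgebra.support_coeff_mul_subset w z hg
  rw [Finset.mem_mul] at this
  obtain ⟨u, hu, v, hv, rfl⟩ := this
  exact mul_mem (hw hu) (hz hv)

lemma supp_add_C {w z : R2 G} (hw : ↑w.coeff.support ⊆ (Subgroup.center G : Set G))
    (hz : ↑z.coeff.support ⊆ (Subgroup.center G : Set G)) :
    ↑(w + z).coeff.support ⊆ (Subgroup.center G : Set G) := by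
  intro g hg
  have := Finsupp.support_add (g₁ := w.coeff) (g₂ := z.coeff) hg
  rw [Finset.mem_union] at this
  rcases this with h | h
  · exact hw h
  · exact hz h

lemma supp_emb_C {g : G} (hg : g ∈ Subgroup.center G) :
    ↑(emb g).coeff.support ⊆ (Subgroup.center G : Set G) := by
  intro x hx
  have := Finsupp.support_single_subset hx
  simp only [Finset.mem_singleton] at this
  subst this; exact hg

lemma supp_one_C : ↑(1 : R2 G).coeff.support ⊆ (Subgroup.center G : Set G) := by
  rw [← emb_one]; exact supp_emb_C (one_mem _)


lemma mul_emb_eq_mapDomain (w : R2 G) (s : G) :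
    w * emb s = MonoidAlgebra.ofCoeff (Finsupp.mapDomain (· * s) w.coeff) := by
  ext h
  rw [mul_emb_apply]
  calc w.coeff (h * s⁻¹) = Finsupp.mapDomain (· * s) w.coeff ((h * s⁻¹) * s) :=
        (Finsupp.mapDomain_apply (mul_left_injective s) w.coeff _).symm
    _ = Finsupp.mapDomain (· * s) w.coeff h := by rw [inv_mul_cancel_right]

lemma odot_add (e : G) (x y : R2 G) : odot e (x + y) = odot e x + odot e y := by
  unfold odot; rw [MonoidAlgebra.coeff_add, Finsupp.mapDomain_add]; rfl

lemma odot_central {e : G} {w : R2 G} (hw : ↑w.coeff.support ⊆ (Subgroup.center G : Set G)) :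
    odot e w = w := by
  unfold odot
  rw [Finsupp.mapDomain_congr (g := id), Finsupp.mapDomain_id]
  intro g hg
  show (if g ∈ Subgroup.center G then g else g * e) = id g
  rw [if_pos (show g ∈ Subgroup.center G from hw hg)]; rfl

lemma odot_coset {e : G} {w : R2 G} (hw : ↑w.coeff.support ⊆ (Subgroup.center G : Set G))
    {s : G} (hs : s ∉ Subgroup.center G) :
    odot e (w * emb s) = w * emb s * emb e := by
  unfold odot
  rw [Finsupp.mapDomain_congr (g := (· * e)), ← mul_emb_eq_mapDomain]
  intro g hg
  have h1 : g * s⁻¹ ∈ Subgroup.center G := support_mul_emb hw s g hg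
  have h2 : g ∉ Subgroup.center G := by
    intro hgC
    refine hs ?_
    have := mul_mem (inv_mem h1) hgC
    rwa [show (g * s⁻¹)⁻¹ * g = s by group] at this
  show (if g ∈ Subgroup.center G then g else g * e) = g * e
  rw [if_neg h2]

noncomputable def augHom (G : Type*) [Group G] : R2 G →ₐ[ZMod 2] ZMod 2 :=
  MonoidAlgebra.lift (ZMod 2) (ZMod 2) G 1

lemma aug_eq_augHom (x : R2 G) : aug x = augHom G x := by
  unfold aug augHom
  rw [MonoidAlgebra.lift_apply]
  apply Finsupp.sum_congr
  intro g _
  simp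

lemma aug_add (x y : R2 G) : aug (x + y) = aug x + aug y := by
  simp [aug_eq_augHom, map_add]

lemma aug_mul (x y : R2 G) : aug (x * y) = aug x * aug y := by
  simp [aug_eq_augHom, map_mul]

lemma aug_emb (g : G) : aug (emb g) = 1 := by
  unfold emb
  rw [aug_eq_augHom]
  show MonoidAlgebra.lift (ZMod 2) (ZMod 2) G 1 (MonoidAlgebra.single g 1) = 1
  rw [MonoidAlgebra.lift_single]
  simp

lemma aug_one : aug (1 : R2 G) = 1 := by rw [← emb_one, aug_emb]

lemma aug_zero : aug (0 : R2 G) = 0 := by simp [aug_eq_augHom]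

lemma pairing_lemma {e : G} (he1 : e ≠ 1) (he2 : e * e = 1) {y : R2 G}
    (h : y * (1 + emb e) = 0) : aug y = 0 := by
  have hinv : e⁻¹ = e := inv_eq_of_mul_eq_one_right he2
  have hy : ∀ g, y.coeff (g * e) = y.coeff g := by
    intro g
    have h2 : y + y * emb e = 0 := by rw [← h, mul_add, mul_one]
    have h3 : y * emb e = y := by
      have h4 : y * emb e = -y := by
        rw [eq_neg_iff_add_eq_zero, add_comm]; exact h2
      rw [h4]
      ext g
      show -y.coeff g = y.coeff g
      have : ∀ r : ZMod 2, -r = r := by decide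
      exact this _
    have h5 : (y * emb e).coeff (g * e) = y.coeff (g * e) := by rw [h3]
    rw [mul_emb_apply, hinv, mul_assoc, he2, mul_one] at h5
    exact h5.symm
  show Finsupp.sum y.coeff (fun _ c => c) = 0
  rw [Finsupp.sum]
  apply Finset.sum_involution (g := fun g _ => g * e)
  · intro g _
    rw [hy]
    have : ∀ r : ZMod 2, r + r = 0 := by decide
    exact this _
  · intro g _ hne heq
    exact he1 (by rwa [mul_eq_left] at heq)
  · intro g hg
    rw [Finsupp.mem_support_iff] at hg ⊢
    rwa [hy]
  · intro g _
    rw [mul_assoc, he2, mul_one]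

lemma filter_coset_eq {w : R2 G} (hw : ↑w.coeff.support ⊆ (Subgroup.center G : Set G)) (s t : G)
    (hst : s * t⁻¹ ∈ Subgroup.center G) :
    Finsupp.filter (fun g => g * t⁻¹ ∈ Subgroup.center G) (w * emb s).coeff = (w * emb s).coeff := by
  ext g
  rw [Finsupp.filter_apply]
  by_cases hp : g * t⁻¹ ∈ Subgroup.center G
  · rw [if_pos hp]
  · rw [if_neg hp]
    by_contra hne
    have hg : g ∈ (w * emb s).coeff.support := Finsupp.mem_support_iff.mpr (fun hh => hne hh.symm)
    have h1 : g * s⁻¹ ∈ Subgroup.center G := support_mul_emb hw s g hg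
    have : g * t⁻¹ ∈ Subgroup.center G := by
      have := mul_mem h1 hst
      rwa [show g * s⁻¹ * (s * t⁻¹) = g * t⁻¹ by group] at this
    exact hp this

lemma filter_coset_ne {w : R2 G} (hw : ↑w.coeff.support ⊆ (Subgroup.center G : Set G)) (s t : G)
    (hst : s * t⁻¹ ∉ Subgroup.center G) :
    Finsupp.filter (fun g => g * t⁻¹ ∈ Subgroup.center G) (w * emb s).coeff = 0 := by
  ext g
  rw [Finsupp.filter_apply]
  by_cases hp : g * t⁻¹ ∈ Subgroup.center G
  · rw [if_pos hp]
    by_contra hne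
    have hg : g ∈ (w * emb s).coeff.support := Finsupp.mem_support_iff.mpr (fun hh => hne (by rw [hh]; rfl))
    have h1 : g * s⁻¹ ∈ Subgroup.center G := support_mul_emb hw s g hg
    have : s * t⁻¹ ∈ Subgroup.center G := by
      have := mul_mem (inv_mem h1) hp
      rwa [show (g * s⁻¹)⁻¹ * (g * t⁻¹) = s * t⁻¹ by group] at this
    exact hst this
  · rw [if_neg hp]
    rfl

end Aux

lemma swapc {R : Type*} [Ring R] {z : R} (hz : ∀ w, z * w = w * z) (u : R) :
    ∀ v, u * (z * v) = z * (u * v) := by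
  intro v; rw [← mul_assoc, ← hz u, mul_assoc]

lemma expand {R : Type*} [Ring R] (x₀ x₁ x₂ x₃ E P Q D A B : R)
    (c0 : ∀ z, x₀ * z = z * x₀) (c1 : ∀ z, x₁ * z = z * x₁) (c2 : ∀ z, x₂ * z = z * x₂)
    (c3 : ∀ z, x₃ * z = z * x₃) (cE : ∀ z, E * z = z * E) (cP : ∀ z, P * z = z * P)
    (cQ : ∀ z, Q * z = z * Q) (cD : ∀ z, D * z = z * D)
    (hA : A * A = P) (hB : B * B = Q) (hBA : B * A = A * B * D) :
    (x₀ + x₁ * A + x₂ * B + x₃ * (A * B)) *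
      (x₀ + x₁ * A * E + x₂ * B * E + x₃ * (A * B) * E) =
    (x₀ * x₀ + x₁ * x₁ * (P * E) + x₂ * x₂ * (Q * E) + x₃ * x₃ * (P * (Q * (E * D))))
      + (x₀ * x₁ * (1 + E) + x₂ * x₃ * (Q * (E * (1 + D)))) * A
      + (x₀ * x₂ * (1 + E) + x₁ * x₃ * (P * (E * (1 + D)))) * B
      + (x₀ * x₃ * (1 + E) + x₁ * x₂ * (E * (1 + D))) * (A * B) := by
  have hAA3 : ∀ v, A * (A * v) = P * v := by intro v; rw [← mul_assoc, hA]
  have hBB3 : ∀ v, B * (B * v) = Q * v := by intro v; rw [← mul_assoc, hB]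
  have hBA3 : ∀ v, B * (A * v) = A * (B * (D * v)) := by
    intro v; rw [← mul_assoc, hBA, mul_assoc, mul_assoc]
  have hBApair : B * A = A * (B * D) := by rw [hBA, mul_assoc]
  simp only [mul_add, add_mul, mul_one, one_mul, mul_assoc, hAA3, hBB3, hBA3, hBApair, hA, hB,
    (c0 x₁).symm, swapc c0 x₁, (c0 x₂).symm, swapc c0 x₂, (c0 x₃).symm, swapc c0 x₃, (c0 P).symm, swapc c0 P, (c0 Q).symm, swapc c0 Q, (c0 E).symm, swapc c0 E, (c0 D).symm, swapc c0 D, (c1 x₂).symm, swapc c1 x₂, (c1 x₃).symm, swapc c1 x₃, (c1 P).symm, swapc c1 P, (c1 Q).symm, swapc c1 Q, (c1 E).symm, swapc c1 E, (c1 D).symm, swapc c1 D, (c2 x₃).symm, swapc c2 x₃, (c2 P).symm, swapc c2 P, (c2 Q).symm, swapc c2 Q, (c2 E).symm, swapc c2 E, (c2 D).symm, swapc c2 D, (c3 P).symm, swapc c3 P, (c3 Q).symm, swapc c3 Q, (c3 E).symm, swapc c3 E, (c3 D).symm, swapc c3 D, (cP Q).symm, swapc cP Q, (cP E).symm, swapc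 cP E, (cP D).symm, swapc cP D, (cQ E).symm, swapc cQ E, (cQ D).symm, swapc cQ D, (cE D).symm, swapc cE D, (c0 A).symm, swapc c0 A, (c0 B).symm, swapc c0 B, (c1 A).symm, swapc c1 A, (c1 B).symm, swapc c1 B, (c2 A).symm, swapc c2 A, (c2 B).symm, swapc c2 B, (c3 A).symm, swapc c3 A, (c3 B).symm, swapc c3 B, (cP A).symm, swapc cP A, (cP B).symm, swapc cP B, (cQ A).symm, swapc cQ A, (cQ B).symm, swapc cQ B, (cE A).symm, swapc cE A, (cE B).symm, swapc cE B, (cD A).symm, swapc cD A, (cD B).symm, swapc cD B]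
  abel

section Grp
variable {G : Type*} [Group G]

lemma conj_mem_center {z : G} (hz : z ∈ Subgroup.center G) (g : G) :
    g * z * g⁻¹ ∈ Subgroup.center G := by
  have h1 : g * z = z * g := Subgroup.mem_center_iff.mp hz g
  rw [h1, mul_inv_cancel_right]
  exact hz

lemma quot_abelian (a b : G)
    (hab : ((a : G ⧸ Subgroup.center G)) * b = (b : G ⧸ Subgroup.center G) * a)
    (hsup : Subgroup.zpowers ((a : G ⧸ Subgroup.center G)) ⊔
      Subgroup.zpowers ((b : G ⧸ Subgroup.center G)) = ⊤) :
    ∀ x y : G ⧸ Subgroup.center G, x * y = y * x := by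
  set A := (a : G ⧸ Subgroup.center G) with hA
  set B := (b : G ⧸ Subgroup.center G) with hB
  have htop : Subgroup.closure ({A, B} : Set (G ⧸ Subgroup.center G)) = ⊤ := by
    rw [show ({A, B} : Set (G ⧸ Subgroup.center G)) = {A} ∪ {B} by rfl]
    rw [Subgroup.closure_union, ← Subgroup.zpowers_eq_closure, ← Subgroup.zpowers_eq_closure]
    exact hsup
  have hcent : ∀ x : G ⧸ Subgroup.center G, x ∈ Subgroup.centralizer {A, B} := by
    intro x
    have hx : x ∈ Subgroup.closure ({A, B} : Set (G ⧸ Subgroup.center G)) := by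
      rw [htop]; exact Subgroup.mem_top x
    refine (Subgroup.closure_le _).mpr ?_ hx
    intro y hy
    rcases hy with h | h
    · subst h
      rw [SetLike.mem_coe, Subgroup.mem_centralizer_iff]
      rintro h (rfl | rfl)
      · rfl
      · exact hab.symm
    · rw [Set.mem_singleton_iff] at h
      subst h
      rw [SetLike.mem_coe, Subgroup.mem_centralizer_iff]
      rintro h (rfl | rfl)
      · exact hab
      · rfl
  intro x y
  have hAx : A * x = x * A := Subgroup.mem_centralizer_iff.mp (hcent x) A (by left; rfl)
  have hBx : B * x = x * B := Subgroup.mem_centralizer_iff.mp (hcent x) B (by right; rfl)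
  have hy : y ∈ Subgroup.closure ({A, B} : Set (G ⧸ Subgroup.center G)) := by
    rw [htop]; exact Subgroup.mem_top y
  have hyc : y ∈ Subgroup.centralizer ({x} : Set (G ⧸ Subgroup.center G)) := by
    refine (Subgroup.closure_le _).mpr ?_ hy
    rintro z (rfl | hz)
    · rw [SetLike.mem_coe, Subgroup.mem_centralizer_iff]
      rintro w rfl
      exact hAx.symm
    · rw [Set.mem_singleton_iff] at hz
      subst hz
      rw [SetLike.mem_coe, Subgroup.mem_centralizer_iff]
      rintro w rfl
      exact hBx.symm
  exact Subgroup.mem_centralizer_iff.mp hyc x rfl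

lemma comm_le_center (hq : ∀ x y : G ⧸ Subgroup.center G, x * y = y * x) :
    commutator G ≤ Subgroup.center G := by
  rw [commutator_def, Subgroup.commutator_le]
  intro g _ h _
  rw [← QuotientGroup.eq_one_iff]
  rw [commutatorElement_def]
  have hco : ((g * h * g⁻¹ * h⁻¹ : G) : G ⧸ Subgroup.center G)
      = (g : G ⧸ Subgroup.center G) * (h : G ⧸ Subgroup.center G) *
        ((g : G ⧸ Subgroup.center G))⁻¹ * ((h : G ⧸ Subgroup.center G))⁻¹ := by
    rw [QuotientGroup.mk_mul, QuotientGroup.mk_mul, QuotientGroup.mk_mul,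
      QuotientGroup.mk_inv, QuotientGroup.mk_inv]
  rw [hco, hq (g : G ⧸ Subgroup.center G) (h : G ⧸ Subgroup.center G)]
  group

end Grp

section Comp
variable {G : Type*} [Group G]

lemma char2R : (1 + 1 : R2 G) = 0 := by
  show (MonoidAlgebra.single 1 1 + MonoidAlgebra.single 1 1 : R2 G) = 0
  rw [← MonoidAlgebra.single_add]
  have : (1 + 1 : ZMod 2) = 0 := rfl
  rw [this, MonoidAlgebra.single_zero]

lemma filter_plain_eq {w : R2 G} (hw : ↑w.coeff.support ⊆ (Subgroup.center G : Set G)) (t : G)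
    (ht : (1 : G) * t⁻¹ ∈ Subgroup.center G) :
    Finsupp.filter (fun g => g * t⁻¹ ∈ Subgroup.center G) w.coeff = w.coeff := by
  have h := filter_coset_eq hw 1 t ht
  rwa [emb_one, mul_one] at h

lemma filter_plain_ne {w : R2 G} (hw : ↑w.coeff.support ⊆ (Subgroup.center G : Set G)) (t : G)
    (ht : (1 : G) * t⁻¹ ∉ Subgroup.center G) :
    Finsupp.filter (fun g => g * t⁻¹ ∈ Subgroup.center G) w.coeff = 0 := by
  have h := filter_coset_ne hw 1 t ht
  rwa [emb_one, mul_one] at h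

lemma components {a b : G} {T₀ T₁ T₂ T₃ : R2 G}
    (h0 : ↑T₀.coeff.support ⊆ (Subgroup.center G : Set G))
    (h1 : ↑T₁.coeff.support ⊆ (Subgroup.center G : Set G))
    (h2 : ↑T₂.coeff.support ⊆ (Subgroup.center G : Set G))
    (h3 : ↑T₃.coeff.support ⊆ (Subgroup.center G : Set G))
    (hna : a ∉ Subgroup.center G) (hnb : b ∉ Subgroup.center G)
    (hnab : a * b ∉ Subgroup.center G)
    (hnba : b * a⁻¹ ∉ Subgroup.center G)
    (heq : T₀ + T₁ * emb a + T₂ * emb b + T₃ * emb (a * b) = 1) :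
    T₀ = 1 ∧ T₁ = 0 ∧ T₂ = 0 ∧ T₃ = 0 := by
  classical
  have hmul : ∀ (T : R2 G) (s : G), T * emb s = 0 → T = 0 := by
    intro T s h
    have : T = T * emb s * emb s⁻¹ := by
      rw [mul_assoc, emb_mul, mul_inv_cancel, emb_one, mul_one]
    rw [this, h, zero_mul]
  -- various coset facts
  have f1a : (1 : G) * a⁻¹ ∉ Subgroup.center G := by
    intro h; exact hna (by simpa using inv_mem h)
  have f1b : (1 : G) * b⁻¹ ∉ Subgroup.center G := by
    intro h; exact hnb (by simpa using inv_mem h)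
  have f1ab : (1 : G) * (a * b)⁻¹ ∉ Subgroup.center G := by
    intro h; exact hnab (by simpa using inv_mem h)
  have fba : b * a⁻¹ ∉ Subgroup.center G := hnba
  have fab' : a * b⁻¹ ∉ Subgroup.center G := by
    intro h
    have := inv_mem h
    rw [show (a * b⁻¹)⁻¹ = b * a⁻¹ by group] at this
    exact hnba this
  have faba : a * b * a⁻¹ ∉ Subgroup.center G := by
    intro h
    have h2 := conj_mem_center h a⁻¹
    rw [show a⁻¹ * (a * b * a⁻¹) * a⁻¹⁻¹ = b by group] at h2
    exact hnb h2
  have fa_ab : a * (a * b)⁻¹ ∉ Subgroup.center G := by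
    intro h
    have := inv_mem h
    rw [show (a * (a * b)⁻¹)⁻¹ = a * b * a⁻¹ by group] at this
    exact faba this
  have fb_ab : b * (a * b)⁻¹ ∉ Subgroup.center G := by
    intro h
    rw [show b * (a * b)⁻¹ = a⁻¹ by group] at h
    exact hna (by simpa using inv_mem h)
  have fab_a : a * b * a⁻¹ ∉ Subgroup.center G := faba
  have fab_b : a * b * b⁻¹ ∉ Subgroup.center G := by
    rwa [mul_inv_cancel_right]
  have hself : ∀ s : G, s * s⁻¹ ∈ Subgroup.center G := by
    intro s; rw [mul_inv_cancel]; exact one_mem _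
  -- component at 1
  have E0 : T₀ = 1 := by
    have e0 := congrArg (Finsupp.filter (fun g => g * (1 : G)⁻¹ ∈ Subgroup.center G)) (congrArg MonoidAlgebra.coeff heq)
    rw [MonoidAlgebra.coeff_add, MonoidAlgebra.coeff_add, MonoidAlgebra.coeff_add, Finsupp.filter_add, Finsupp.filter_add, Finsupp.filter_add,
      filter_plain_eq h0 1 (hself 1),
      filter_coset_ne h1 a 1 (by simpa using hna),
      filter_coset_ne h2 b 1 (by simpa using hnb),
      filter_coset_ne h3 (a * b) 1 (by simpa using hnab),
      filter_plain_eq supp_one_C 1 (hself 1)] at e0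
    exact MonoidAlgebra.coeff_injective (by simpa using e0)
  -- component at a
  have E1 : T₁ = 0 := by
    apply hmul T₁ a
    have e1 := congrArg (Finsupp.filter (fun g => g * a⁻¹ ∈ Subgroup.center G)) (congrArg MonoidAlgebra.coeff heq)
    rw [MonoidAlgebra.coeff_add, MonoidAlgebra.coeff_add, MonoidAlgebra.coeff_add, Finsupp.filter_add, Finsupp.filter_add, Finsupp.filter_add,
      filter_plain_ne h0 a f1a,
      filter_coset_eq h1 a a (hself a),
      filter_coset_ne h2 b a fba,
      filter_coset_ne h3 (a * b) a fab_a,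
      filter_plain_ne supp_one_C a f1a] at e1
    exact MonoidAlgebra.coeff_injective (by simpa using e1)
  -- component at b
  have E2 : T₂ = 0 := by
    apply hmul T₂ b
    have e2 := congrArg (Finsupp.filter (fun g => g * b⁻¹ ∈ Subgroup.center G)) (congrArg MonoidAlgebra.coeff heq)
    rw [MonoidAlgebra.coeff_add, MonoidAlgebra.coeff_add, MonoidAlgebra.coeff_add, Finsupp.filter_add, Finsupp.filter_add, Finsupp.filter_add,
      filter_plain_ne h0 b f1b,
      filter_coset_ne h1 a b fab',
      filter_coset_eq h2 b b (hself b),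
      filter_coset_ne h3 (a * b) b fab_b,
      filter_plain_ne supp_one_C b f1b] at e2
    exact MonoidAlgebra.coeff_injective (by simpa using e2)
  -- component at a*b
  have E3 : T₃ = 0 := by
    apply hmul T₃ (a * b)
    have e3 := congrArg (Finsupp.filter (fun g => g * (a * b)⁻¹ ∈ Subgroup.center G)) (congrArg MonoidAlgebra.coeff heq)
    rw [MonoidAlgebra.coeff_add, MonoidAlgebra.coeff_add, MonoidAlgebra.coeff_add, Finsupp.filter_add, Finsupp.filter_add, Finsupp.filter_add,
      filter_plain_ne h0 (a * b) f1ab,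
      filter_coset_ne h1 a (a * b) fa_ab,
      filter_coset_ne h2 b (a * b) fb_ab,
      filter_coset_eq h3 (a * b) (a * b) (hself (a * b)),
      filter_plain_ne supp_one_C (a * b) f1ab] at e3
    exact MonoidAlgebra.coeff_injective (by simpa using e3)
  exact ⟨E0, E1, E2, E3⟩

end Comp

/-- If `x = x₀ + x₁a + x₂b + x₃ab ∈ V_⊙(ℤ₂G)` with `x₀, x₁, x₂, x₃ ∈ ℤ₂C` and `χ(x₀) = 1`,
then `χ(x₁) = χ(x₂) = χ(x₃) = 0`. -/
theorem stmt_16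
 {G : Type*} [Group G] [Fintype G] (hG : IsPGroup 2 G)
    (e : G) (hcomm : commutator G = Subgroup.zpowers e) (he : orderOf e = 2)
    (a b : G)
    (ha : orderOf ((a : G ⧸ Subgroup.center G)) = 2)
    (hb : orderOf ((b : G ⧸ Subgroup.center G)) = 2)
    (hab : ((a : G ⧸ Subgroup.center G)) * b = (b : G ⧸ Subgroup.center G) * a)
    (hinf : Subgroup.zpowers ((a : G ⧸ Subgroup.center G)) ⊓
      Subgroup.zpowers ((b : G ⧸ Subgroup.center G)) = ⊥)
    (hsup : Subgroup.zpowers ((a : G ⧸ Subgroup.center G)) ⊔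
      Subgroup.zpowers ((b : G ⧸ Subgroup.center G)) = ⊤)
    :
    ∀ u : (R2 G)ˣ, u ∈ VodotSet G e →
      ∀ x₀ x₁ x₂ x₃ : R2 G,
        ↑x₀.coeff.support ⊆ (Subgroup.center G : Set G) →
        ↑x₁.coeff.support ⊆ (Subgroup.center G : Set G) →
        ↑x₂.coeff.support ⊆ (Subgroup.center G : Set G) →
        ↑x₃.coeff.support ⊆ (Subgroup.center G : Set G) →
        (u : R2 G) = x₀ + x₁ * emb a + x₂ * emb b + x₃ * (emb a * emb b) →
        aug x₀ = 1 →
        (aug x₁ = 0 ∧ aug x₂ = 0 ∧ aug x₃ = 0) := by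
  classical
  have hQab : ∀ x y : G ⧸ Subgroup.center G, x * y = y * x := quot_abelian a b hab hsup
  have hcle : commutator G ≤ Subgroup.center G := comm_le_center hQab
  have hecen : e ∈ Subgroup.center G := hcle (by rw [hcomm]; exact Subgroup.mem_zpowers e)
  have he2 : e * e = 1 := by
    have h := pow_orderOf_eq_one e
    rwa [he, pow_two] at h
  have hene : e ≠ 1 := by
    intro h
    rw [h, orderOf_one] at he
    exact absurd he (by norm_num)
  have hmemC : ∀ g : G, g ∈ Subgroup.center G ↔ (g : G ⧸ Subgroup.center G) = 1 :=
    fun g => (QuotientGroup.eq_one_iff g).symm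
  have hA1 : ((a : G ⧸ Subgroup.center G)) ≠ 1 := by
    intro h; rw [h, orderOf_one] at ha; exact absurd ha (by norm_num)
  have hB1 : ((b : G ⧸ Subgroup.center G)) ≠ 1 := by
    intro h; rw [h, orderOf_one] at hb; exact absurd hb (by norm_num)
  have haC : a ∉ Subgroup.center G := fun h => hA1 ((hmemC a).mp h)
  have hbC : b ∉ Subgroup.center G := fun h => hB1 ((hmemC b).mp h)
  have habC : a * b ∉ Subgroup.center G := by
    intro h
    have h2 := (hmemC (a * b)).mp h
    rw [QuotientGroup.mk_mul] at h2
    have hBinv : (b : G ⧸ Subgroup.center G) = (a : G ⧸ Subgroup.center G)⁻¹ := by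
      have h3 := congrArg (fun z => (a : G ⧸ Subgroup.center G)⁻¹ * z) h2
      simpa [← mul_assoc] using h3
    have hBmem : (b : G ⧸ Subgroup.center G) ∈
        Subgroup.zpowers ((a : G ⧸ Subgroup.center G)) ⊓
          Subgroup.zpowers ((b : G ⧸ Subgroup.center G)) :=
      Subgroup.mem_inf.mpr
        ⟨by rw [hBinv]; exact inv_mem (Subgroup.mem_zpowers _), Subgroup.mem_zpowers _⟩
    rw [hinf] at hBmem
    exact hB1 (Subgroup.mem_bot.mp hBmem)
  have hbaC : b * a⁻¹ ∉ Subgroup.center G := by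
    intro h
    have h2 := (hmemC (b * a⁻¹)).mp h
    rw [QuotientGroup.mk_mul, QuotientGroup.mk_inv] at h2
    have hba2 : (b : G ⧸ Subgroup.center G) = (a : G ⧸ Subgroup.center G) :=
      mul_inv_eq_one.mp h2
    have hAmem : (a : G ⧸ Subgroup.center G) ∈
        Subgroup.zpowers ((a : G ⧸ Subgroup.center G)) ⊓
          Subgroup.zpowers ((b : G ⧸ Subgroup.center G)) :=
      Subgroup.mem_inf.mpr
        ⟨Subgroup.mem_zpowers _, by rw [← hba2]; exact Subgroup.mem_zpowers _⟩
    rw [hinf] at hAmem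
    exact hA1 (Subgroup.mem_bot.mp hAmem)
  have ha2C : a * a ∈ Subgroup.center G := by
    rw [hmemC, QuotientGroup.mk_mul]
    have h := pow_orderOf_eq_one ((a : G ⧸ Subgroup.center G))
    rwa [ha, pow_two] at h
  have hb2C : b * b ∈ Subgroup.center G := by
    rw [hmemC, QuotientGroup.mk_mul]
    have h := pow_orderOf_eq_one ((b : G ⧸ Subgroup.center G))
    rwa [hb, pow_two] at h
  set c : G := (a * b)⁻¹ * (b * a) with hcdef
  have hba : b * a = a * b * c := by rw [hcdef]; group
  have hcm : c ∈ commutator G := by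
    have hc2 : c = ⁅b⁻¹, a⁻¹⁆ := by rw [commutatorElement_def, hcdef]; group
    rw [hc2, commutator_def]
    exact Subgroup.commutator_mem_commutator (Subgroup.mem_top _) (Subgroup.mem_top _)
  have hccen : c ∈ Subgroup.center G := hcle hcm
  have hc1e : c = 1 ∨ c = e := by
    have hz : c ∈ Subgroup.zpowers e := by rw [← hcomm]; exact hcm
    obtain ⟨k, hk⟩ := Subgroup.mem_zpowers_iff.mp hz
    rw [← zpow_mod_orderOf, he] at hk
    have hcast : ((2 : ℕ) : ℤ) = 2 := by norm_num
    rw [hcast] at hk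
    rcases Int.emod_two_eq k with h | h
    · left; rw [← hk, h, zpow_zero]
    · right; rw [← hk, h, zpow_one]
  intro u hu x₀ x₁ x₂ x₃ h0 h1 h2 h3 hx hx0
  obtain ⟨_, hod⟩ := hu
  have hxo : (u : R2 G) * odot e (u : R2 G) = 1 := by rw [hod]; exact u.mul_inv
  have hod2 : odot e ((x₀ + x₁ * emb a + x₂ * emb b + x₃ * (emb a * emb b)) : R2 G)
      = x₀ + x₁ * emb a * emb e + x₂ * emb b * emb e + x₃ * (emb a * emb b) * emb e := by
    rw [odot_add, odot_add, odot_add, odot_central h0, odot_coset h1 haC, odot_coset h2 hbC]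
    congr 1
    rw [emb_mul a b, odot_coset h3 habC]
  rw [hx, hod2] at hxo
  have cc0 := central_comm h0
  have cc1 := central_comm h1
  have cc2 := central_comm h2
  have cc3 := central_comm h3
  have ccE := central_comm (supp_emb_C hecen)
  have ccP := central_comm (supp_emb_C ha2C)
  have ccQ := central_comm (supp_emb_C hb2C)
  have ccD := central_comm (supp_emb_C hccen)
  have hBAe : emb b * emb a = emb a * emb b * emb c := by
    rw [emb_mul b a, emb_mul a b, emb_mul (a * b) c, hba]
  rw [expand x₀ x₁ x₂ x₃ (emb e) (emb (a * a)) (emb (b * b)) (emb c) (emb a) (emb b)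
      cc0 cc1 cc2 cc3 ccE ccP ccQ ccD (emb_mul a a) (emb_mul b b) hBAe] at hxo
  rw [emb_mul a b] at hxo
  have hE := supp_emb_C hecen
  have hP := supp_emb_C ha2C
  have hQs := supp_emb_C hb2C
  have hD := supp_emb_C hccen
  have hcomps := components (heq := hxo)
    (h0 := supp_add_C (supp_add_C (supp_add_C (supp_mul_C h0 h0)
        (supp_mul_C (supp_mul_C h1 h1) (supp_mul_C hP hE)))
        (supp_mul_C (supp_mul_C h2 h2) (supp_mul_C hQs hE)))
        (supp_mul_C (supp_mul_C h3 h3) (supp_mul_C hP (supp_mul_C hQs (supp_mul_C hE hD)))))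
    (h1 := supp_add_C (supp_mul_C (supp_mul_C h0 h1) (supp_add_C supp_one_C hE))
        (supp_mul_C (supp_mul_C h2 h3) (supp_mul_C hQs (supp_mul_C hE (supp_add_C supp_one_C hD)))))
    (h2 := supp_add_C (supp_mul_C (supp_mul_C h0 h2) (supp_add_C supp_one_C hE))
        (supp_mul_C (supp_mul_C h1 h3) (supp_mul_C hP (supp_mul_C hE (supp_add_C supp_one_C hD)))))
    (h3 := supp_add_C (supp_mul_C (supp_mul_C h0 h3) (supp_add_C supp_one_C hE))
        (supp_mul_C (supp_mul_C h1 h2) (supp_mul_C hE (supp_add_C supp_one_C hD))))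
    (hna := haC) (hnb := hbC) (hnab := habC) (hnba := hbaC)
  obtain ⟨E0, E1, E2, E3⟩ := hcomps
  have sq2 : ∀ z : ZMod 2, z * z = z := by decide
  have hsum : aug x₁ + aug x₂ + aug x₃ = 0 := by
    have h := congrArg aug E0
    simp only [aug_add, aug_mul, aug_emb, aug_one, mul_one, one_mul, hx0] at h
    have e1 := sq2 (aug x₁); have e2 := sq2 (aug x₂); have e3 := sq2 (aug x₃)
    linear_combination h - e1 - e2 - e3
  rcases hc1e with hc | hc
  · -- c = 1 : a and b commute
    rw [hc, emb_one, char2R] at E1 E2 E3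
    simp only [mul_zero, add_zero] at E1 E2 E3
    have p1 : aug (x₀ * x₁) = 0 := pairing_lemma hene he2 E1
    have p2 : aug (x₀ * x₂) = 0 := pairing_lemma hene he2 E2
    have p3 : aug (x₀ * x₃) = 0 := pairing_lemma hene he2 E3
    rw [aug_mul, hx0, one_mul] at p1 p2 p3
    exact ⟨p1, p2, p3⟩
  · -- c = e
    rw [hc] at E1 E2 E3
    have p1 : aug (x₀ * x₁ + x₂ * x₃ * (emb (b * b) * emb e)) = 0 := by
      apply pairing_lemma hene he2
      have key : (x₀ * x₁ + x₂ * x₃ * (emb (b * b) * emb e)) * (1 + emb e)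
          = x₀ * x₁ * (1 + emb e)
            + x₂ * x₃ * (emb (b * b) * (emb e * (1 + emb e))) := by
        simp only [add_mul, mul_assoc]
      rw [key]; exact E1
    have p2 : aug (x₀ * x₂ + x₁ * x₃ * (emb (a * a) * emb e)) = 0 := by
      apply pairing_lemma hene he2
      have key : (x₀ * x₂ + x₁ * x₃ * (emb (a * a) * emb e)) * (1 + emb e)
          = x₀ * x₂ * (1 + emb e)
            + x₁ * x₃ * (emb (a * a) * (emb e * (1 + emb e))) := by
        simp only [add_mul, mul_assoc]
      rw [key]; exact E2
    have p3 : aug (x₀ * x₃ + x₁ * x₂ * emb e) = 0 := by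
      apply pairing_lemma hene he2
      have key : (x₀ * x₃ + x₁ * x₂ * emb e) * (1 + emb e)
          = x₀ * x₃ * (1 + emb e) + x₁ * x₂ * (emb e * (1 + emb e)) := by
        simp only [add_mul, mul_assoc]
      rw [key]; exact E3
    simp only [aug_add, aug_mul, aug_emb, mul_one, hx0, one_mul] at p1 p2 p3
    have final : ∀ p q r : ZMod 2, p + q + r = 0 → p + q * r = 0 → q + p * r = 0 →
        r + p * q = 0 → p = 0 ∧ q = 0 ∧ r = 0 := by decide
    exact final _ _ _ hsum (by linear_combination p1) (by linear_combination p2)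
      (by linear_combination p3)
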